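/- arXiv:1401.6060 — 5 statements merged into one kernel-verified Lean document; each statement's English description precedes it below -/
import Mathlib

section
/- Let a, b, c, d be nonnegative real numbers with a + b ≤ c ≤ d. Then every point (R1, R2) with 0 ≤ R1 ≤ a, 0 ≤ R2 ≤ c, and R1 + R2 ≤ a + b is componentwise dominated by some convex combination of the two points (a, b) and (0, d). -/
/-- Right-trapezoid case of Proposition 1 (Equivalent Superposition Region): when
`a + b ≤ c ≤ d`, every point of the region is componentwise dominated by a convex
combination of the points `(a, b)` and `(0, d)`. -/
theorem superposition_region_trapezoid (a b c d : ℝ)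
    (ha : 0 ≤ a) (hb : 0 ≤ b) (hc : 0 ≤ c) (hd : 0 ≤ d)
    (habc : a + b ≤ c) (hcd : c ≤ d)
    (R1 R2 : ℝ) (hR1 : 0 ≤ R1) (hR1' : R1 ≤ a) (hR2 : 0 ≤ R2) (hR2' : R2 ≤ c)
    (hsum : R1 + R2 ≤ a + b) :
    ∃ l : ℝ, 0 ≤ l ∧ l ≤ 1 ∧
      R1 ≤ l * a + (1 - l) * 0 ∧
      R2 ≤ l * b + (1 - l) * d := by
  rcases eq_or_lt_of_le ha with h0 | h0
  · refine ⟨0, le_refl _, by norm_num, ?_, ?_⟩ <;> nlinarith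
  · refine ⟨R1 / a, div_nonneg hR1 ha, (div_le_one h0).2 hR1', ?_, ?_⟩
    · rw [div_mul_cancel₀ _ (ne_of_gt h0)]; linarith
    · have h1 : R1 / a * a = R1 := div_mul_cancel₀ _ (ne_of_gt h0)
      have h2 : (1 - R1 / a) * (a + b) ≤ (1 - R1 / a) * d := by
        apply mul_le_mul_of_nonneg_left (by linarith)
        have := (div_le_one h0).2 hR1'; linarith
      nlinarith
end

section
/- Let a0, b0, a1, b2, t be nonnegative real numbers with a0 ≤ b0, t < b2, and b0 + t < a0 + a1. Then every point (R1, R2) with 0 ≤ R1 ≤ a0 + a1, 0 ≤ R2 ≤ b0 + b2, and R1 + R2 ≤ a0 + a1 + b2 − t is componentwise dominated by some convex combination of the two corner points (a0 + a1, b2 − t) and (a0 + a1 − t − b0, b0 + b2). -/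
/-- Pentagon case of Proposition 3 (Equivalent Marton's Region): under `a0 ≤ b0`, `t < b2`,
and `b0 + t < a0 + a1`, every point of the region is componentwise dominated by a convex
combination of the corner points `(a0 + a1, b2 - t)` and `(a0 + a1 - t - b0, b0 + b2)`. -/
theorem marton_region_pentagon (a0 b0 a1 b2 t : ℝ)
    (ha0 : 0 ≤ a0) (hb0 : 0 ≤ b0) (ha1 : 0 ≤ a1) (hb2 : 0 ≤ b2) (ht : 0 ≤ t)
    (ha0b0 : a0 ≤ b0) (htb2 : t < b2) (hcorner : b0 + t < a0 + a1)
    (R1 R2 : ℝ) (hR1 : 0 ≤ R1) (hR1' : R1 ≤ a0 + a1) (hR2 : 0 ≤ R2) (hR2' : R2 ≤ b0 + b2)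
    (hsum : R1 + R2 ≤ a0 + a1 + b2 - t) :
    ∃ l : ℝ, 0 ≤ l ∧ l ≤ 1 ∧
      R1 ≤ l * (a0 + a1) + (1 - l) * (a0 + a1 - t - b0) ∧
      R2 ≤ l * (b2 - t) + (1 - l) * (b0 + b2) := by
  by_cases h : R1 ≤ a0 + a1 - t - b0
  · exact ⟨0, le_refl 0, zero_le_one, by linarith, by linarith⟩
  · push_neg at h
    have hpos : 0 < t + b0 := by nlinarith
    refine ⟨(R1 - (a0 + a1 - t - b0)) / (t + b0), ?_, ?_, ?_, ?_⟩
    · exact div_nonneg (by linarith) hpos.le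
    · rw [div_le_one hpos]; linarith
    · have : (R1 - (a0 + a1 - t - b0)) / (t + b0) * (t + b0)
          = R1 - (a0 + a1 - t - b0) := div_mul_cancel₀ _ hpos.ne'
      nlinarith [this]
    · have : (R1 - (a0 + a1 - t - b0)) / (t + b0) * (t + b0)
          = R1 - (a0 + a1 - t - b0) := div_mul_cancel₀ _ hpos.ne'
      nlinarith [this]
end

section
/- For each natural number n, let H_n, L_n, H'_n, L'_n, M_n be finite subsets of {0, 1, …, n−1} such that H'_n ⊆ H_n, L_n ⊆ L'_n, L_n ⊆ M_n, H_n ∩ L_n = ∅, and H'_n ∩ L'_n = ∅. Suppose that, as n → ∞, |{0,…,n−1} \ (H_n ∪ L_n)|/n → 0, |{0,…,n−1} \ (H'_n ∪ L'_n)|/n → 0, |L'_n|/n → 1 − h', and |M_n|/n → 1 − g. Then (|H'_n ∩ M_n| − |(H'_n)ᶜ ∩ (L_n)ᶜ ∩ (M_n)ᶜ|)/n → h' − g, where complements are taken within {0,…,n−1}. -/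
open Filter

/-- Equation (eq:rate2): the rate computation for the second user of the polar binning
scheme. With complements taken within `{0,…,n-1}`, the normalized difference between the
information set `H'_n ∩ M_n` and the critical frozen set `(H'_n)ᶜ ∩ (L_n)ᶜ ∩ (M_n)ᶜ`
tends to `h' - g`. -/
theorem binning_rate_computation (H L H' L' M : ℕ → Finset ℕ) (h' g : ℝ)
    (hHsub : ∀ n, H n ⊆ Finset.range n)
    (hLsub : ∀ n, L n ⊆ Finset.range n)
    (hH'sub : ∀ n, H' n ⊆ Finset.range n)
    (hL'sub : ∀ n, L' n ⊆ Finset.range n)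
    (hMsub : ∀ n, M n ⊆ Finset.range n)
    (hH'H : ∀ n, H' n ⊆ H n)
    (hLL' : ∀ n, L n ⊆ L' n)
    (hLM : ∀ n, L n ⊆ M n)
    (hHL : ∀ n, H n ∩ L n = ∅)
    (hH'L' : ∀ n, H' n ∩ L' n = ∅)
    (hrest : Tendsto (fun n => ((Finset.range n \ (H n ∪ L n)).card : ℝ) / n) atTop (nhds 0))
    (hrest' : Tendsto (fun n => ((Finset.range n \ (H' n ∪ L' n)).card : ℝ) / n) atTop (nhds 0))
    (hL'lim : Tendsto (fun n => ((L' n).card : ℝ) / n) atTop (nhds (1 - h')))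
    (hMlim : Tendsto (fun n => ((M n).card : ℝ) / n) atTop (nhds (1 - g))) :
    Tendsto (fun n => (((H' n ∩ M n).card : ℝ) -
        (((Finset.range n \ H' n) ∩ (Finset.range n \ L n) ∩ (Finset.range n \ M n)).card : ℝ)) / n)
      atTop (nhds (h' - g)) := by
  -- numerator equals |H'| + |M| - n
  have hnum : ∀ n, (((H' n ∩ M n).card : ℝ) -
      (((Finset.range n \ H' n) ∩ (Finset.range n \ L n) ∩ (Finset.range n \ M n)).card : ℝ))
      = ((H' n).card : ℝ) + ((M n).card : ℝ) - n := by
    intro n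
    have hset : (Finset.range n \ H' n) ∩ (Finset.range n \ L n) ∩ (Finset.range n \ M n)
        = Finset.range n \ (H' n ∪ M n) := by
      ext x
      simp only [Finset.mem_inter, Finset.mem_sdiff, Finset.mem_union]
      constructor
      · rintro ⟨⟨⟨hx, hH'⟩, -⟩, ⟨-, hM⟩⟩
        exact ⟨hx, fun h => h.elim hH' hM⟩
      · rintro ⟨hx, h⟩
        exact ⟨⟨⟨hx, fun h1 => h (Or.inl h1)⟩, ⟨hx, fun h1 => h (Or.inr (hLM n h1))⟩⟩,
          ⟨hx, fun h1 => h (Or.inr h1)⟩⟩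
    have hsub : H' n ∪ M n ⊆ Finset.range n := Finset.union_subset (hH'sub n) (hMsub n)
    have hcard : (Finset.range n \ (H' n ∪ M n)).card
        = n - (H' n ∪ M n).card := by
      rw [Finset.card_sdiff_of_subset hsub, Finset.card_range]
    have hle : (H' n ∪ M n).card ≤ n := by
      simpa using Finset.card_le_card hsub
    have hcardR : ((Finset.range n \ (H' n ∪ M n)).card : ℝ)
        = (n : ℝ) - ((H' n ∪ M n).card : ℝ) := by
      rw [hcard, Nat.cast_sub hle]
    have hiu : ((H' n ∪ M n).card : ℝ) + ((H' n ∩ M n).card : ℝ)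
        = ((H' n).card : ℝ) + ((M n).card : ℝ) := by
      exact_mod_cast congrArg (Nat.cast : ℕ → ℝ) (Finset.card_union_add_card_inter (H' n) (M n))
    rw [hset, hcardR]
    linarith
  -- |H'| = n - |L'| - |rest'|
  have hH'card : ∀ n, ((H' n).card : ℝ)
      = (n : ℝ) - ((L' n).card : ℝ) - ((Finset.range n \ (H' n ∪ L' n)).card : ℝ) := by
    intro n
    have hsub : H' n ∪ L' n ⊆ Finset.range n := Finset.union_subset (hH'sub n) (hL'sub n)
    have hcard : (Finset.range n \ (H' n ∪ L' n)).card = n - (H' n ∪ L' n).card := by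
      rw [Finset.card_sdiff_of_subset hsub, Finset.card_range]
    have hle : (H' n ∪ L' n).card ≤ n := by
      simpa using Finset.card_le_card hsub
    have hdisj : Disjoint (H' n) (L' n) := by
      rw [Finset.disjoint_iff_inter_eq_empty]; exact hH'L' n
    have hu : ((H' n ∪ L' n).card : ℝ) = ((H' n).card : ℝ) + ((L' n).card : ℝ) := by
      exact_mod_cast congrArg (Nat.cast : ℕ → ℝ) (Finset.card_union_of_disjoint hdisj)
    have : ((Finset.range n \ (H' n ∪ L' n)).card : ℝ)
        = (n : ℝ) - ((H' n ∪ L' n).card : ℝ) := by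
      rw [hcard, Nat.cast_sub hle]
    rw [hu] at this
    linarith
  have hH'lim : Tendsto (fun n => ((H' n).card : ℝ) / n) atTop (nhds h') := by
    have h1 : Tendsto (fun n : ℕ => 1 - ((L' n).card : ℝ) / n
        - ((Finset.range n \ (H' n ∪ L' n)).card : ℝ) / n) atTop (nhds (1 - (1 - h') - 0)) :=
      (tendsto_const_nhds.sub hL'lim).sub hrest'
    have h2 : (1 : ℝ) - (1 - h') - 0 = h' := by ring
    rw [h2] at h1
    refine h1.congr' ?_
    filter_upwards [eventually_ge_atTop 1] with n hn
    have hn0 : (n : ℝ) ≠ 0 := by positivity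
    rw [hH'card n]
    field_simp
  have hmain : Tendsto (fun n : ℕ => ((H' n).card : ℝ) / n + ((M n).card : ℝ) / n - 1)
      atTop (nhds (h' + (1 - g) - 1)) := (hH'lim.add hMlim).sub tendsto_const_nhds
  have h2 : h' + (1 - g) - 1 = h' - g := by ring
  rw [h2] at hmain
  refine hmain.congr' ?_
  filter_upwards [eventually_ge_atTop 1] with n hn
  have hn0 : (n : ℝ) ≠ 0 := by
    have : 0 < n := hn
    positivity
  rw [hnum n]
  field_simp
end

section
/- Let V and W be finite sets, let q : {0,1} × V → ℝ be a nonnegative function (the joint probability mass function of a binary T and V), and let k : V × W → ℝ be a nonnegative function with Σ_{w∈W} k(v,w) = 1 for every v ∈ V (a channel from V to W). Define the joint pmf p(t,v,w) = q(t,v) · k(v,w), so that T − V − W forms a Markov chain. Then Z(T|W) ≥ Z(T|V), where Z(T|V) = 2 Σ_{v} √(q(0,v) · q(1,v)) and Z(T|W) = 2 Σ_{w} √((Σ_{v} p(0,v,w)) · (Σ_{v} p(1,v,w))). -/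
/-- Data-processing inequality for the Bhattacharyya parameter: if `T - V - W` is a Markov
chain where `W` is obtained from `V` through a channel `k`, then `Z(T|W) ≥ Z(T|V)`. -/
theorem bhattacharyya_data_processing {V W : Type*} [Fintype V] [Fintype W]
    (q : Bool × V → ℝ) (k : V × W → ℝ)
    (hq : ∀ x, 0 ≤ q x) (hk : ∀ x, 0 ≤ k x)
    (hrow : ∀ v : V, ∑ w : W, k (v, w) = 1) :
    2 * ∑ w : W, Real.sqrt ((∑ v : V, q (false, v) * k (v, w)) * (∑ v : V, q (true, v) * k (v, w))) ≥
      2 * ∑ v : V, Real.sqrt (q (false, v) * q (true, v)) := by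
  have key : ∀ w : W,
      ∑ v : V, Real.sqrt (q (false, v) * q (true, v)) * k (v, w) ≤
        Real.sqrt ((∑ v : V, q (false, v) * k (v, w)) * (∑ v : V, q (true, v) * k (v, w))) := by
    intro w
    have h := Real.sum_sqrt_mul_sqrt_le (Finset.univ : Finset V)
      (f := fun v => q (false, v) * k (v, w)) (g := fun v => q (true, v) * k (v, w))
      (fun v => mul_nonneg (hq _) (hk _)) (fun v => mul_nonneg (hq _) (hk _))
    calc ∑ v : V, Real.sqrt (q (false, v) * q (true, v)) * k (v, w)
        = ∑ v : V, Real.sqrt (q (false, v) * k (v, w)) * Real.sqrt (q (true, v) * k (v, w)) := by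
          apply Finset.sum_congr rfl
          intro v _
          rw [← Real.sqrt_mul (mul_nonneg (hq _) (hk _)),
            show q (false, v) * k (v, w) * (q (true, v) * k (v, w)) =
              q (false, v) * q (true, v) * (k (v, w) * k (v, w)) by ring,
            Real.sqrt_mul (mul_nonneg (hq _) (hq _)), Real.sqrt_mul_self (hk _)]
      _ ≤ _ := h
      _ = _ := (Real.sqrt_mul (Finset.sum_nonneg fun v _ => mul_nonneg (hq _) (hk _)) _).symm
  have hsum : ∑ v : V, Real.sqrt (q (false, v) * q (true, v)) =
      ∑ w : W, ∑ v : V, Real.sqrt (q (false, v) * q (true, v)) * k (v, w) := by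
    rw [Finset.sum_comm]
    apply Finset.sum_congr rfl
    intro v _
    rw [← Finset.mul_sum, hrow v, mul_one]
  have := Finset.sum_le_sum (fun w (_ : w ∈ Finset.univ) => key w)
  rw [hsum]
  linarith
end

section
/- Let n be a natural number, Y a finite set, and p a probability mass function on ({0,1}^n) × Y; let (U^{1:n}, Y) be distributed according to p. For each i ∈ {1,…,n}, let û_i be any function mapping a past (u^{1:i−1}, y) to a maximizer over u ∈ {0,1} of P(U^i = u, U^{1:i−1} = u^{1:i−1}, Y = y). Then the genie-aided successive-cancellation error probability satisfies P(∃ i ∈ {1,…,n} : û_i(U^{1:i−1}, Y) ≠ U^i) ≤ (1/2) Σ_{i=1}^{n} Z(U^i | U^{1:i−1}, Y), where Z(U^i | U^{1:i−1}, Y) = 2 Σ_{u^{1:i−1}, y} √(P(U^i=0, U^{1:i−1}=u^{1:i−1}, Y=y) · P(U^i=1, U^{1:i−1}=u^{1:i−1}, Y=y)). -/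
/-- `scProb p i u w y` is the joint probability `P(U^i = u, U^{1:i-1} = w, Y = y)` under the
joint pmf `p` on `{0,1}^n × Y`, where `w` prescribes the coordinates before `i`. -/
def scProb {n : ℕ} {Y : Type*} [Fintype Y] (p : (Fin n → Bool) × Y → ℝ)
    (i : Fin n) (u : Bool) (w : Fin i → Bool) (y : Y) : ℝ :=
  ∑ x : Fin n → Bool,
    if x i = u ∧ (∀ j : Fin i, x (Fin.castLE i.isLt.le j) = w j) then p (x, y) else 0

/-- `scZ p i` is the Bhattacharyya parameter `Z(U^i | U^{1:i-1}, Y)` of the bit `U^i` given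
the past `U^{1:i-1}` and the observation `Y`:
`Z(U^i | U^{1:i-1}, Y) = 2 Σ_{w, y} √(P(U^i=0, U^{1:i-1}=w, Y=y) · P(U^i=1, U^{1:i-1}=w, Y=y))`. -/
noncomputable def scZ {n : ℕ} {Y : Type*} [Fintype Y] (p : (Fin n → Bool) × Y → ℝ) (i : Fin n) : ℝ :=
  2 * ∑ w : Fin i → Bool, ∑ y : Y,
    Real.sqrt (scProb p i false w y * scProb p i true w y)

lemma scProb_nonneg {n : ℕ} {Y : Type*} [Fintype Y] (p : (Fin n → Bool) × Y → ℝ)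
    (hp : ∀ x, 0 ≤ p x) (i : Fin n) (u : Bool) (w : Fin i → Bool) (y : Y) :
    0 ≤ scProb p i u w y := by
  refine Finset.sum_nonneg fun x _ => ?_
  split_ifs
  · exact hp _
  · exact le_rfl

/-- Genie-aided successive-cancellation union bound: if each `û_i` is a maximizer of
`u ↦ P(U^i = u, U^{1:i-1} = w, Y = y)`, then the probability that some successive MAP
decision (applied with the true past) is wrong is at most `(1/2) Σ_i Z(U^i | U^{1:i-1}, Y)`. -/
theorem sc_error_le_sum_bhattacharyya {n : ℕ} {Y : Type*} [Fintype Y]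
    (p : (Fin n → Bool) × Y → ℝ) (hp : ∀ x, 0 ≤ p x)
    (hsum : ∑ x : (Fin n → Bool) × Y, p x = 1)
    (uhat : (i : Fin n) → (Fin i → Bool) → Y → Bool)
    (hmax : ∀ (i : Fin n) (w : Fin i → Bool) (y : Y) (u : Bool),
      scProb p i u w y ≤ scProb p i (uhat i w y) w y) :
    ∑ x : Fin n → Bool, ∑ y : Y,
        (if ∃ i : Fin n, uhat i (fun j => x (Fin.castLE i.isLt.le j)) y ≠ x i
          then p (x, y) else 0) ≤
      (1 / 2) * ∑ i : Fin n, scZ p i := by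
  classical
  -- shorthand
  set f : Fin n → (Fin n → Bool) → Y → ℝ := fun i x y =>
    if uhat i (fun j => x (Fin.castLE i.isLt.le j)) y ≠ x i then p (x, y) else 0 with hf
  have fnonneg : ∀ i x y, 0 ≤ f i x y := by
    intro i x y; simp only [hf]; split_ifs; exacts [hp _, le_rfl]
  -- Step 1: pointwise union bound
  have step1 : ∀ (x : Fin n → Bool) (y : Y),
      (if ∃ i : Fin n, uhat i (fun j => x (Fin.castLE i.isLt.le j)) y ≠ x i
        then p (x, y) else 0) ≤ ∑ i : Fin n, f i x y := by
    intro x y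
    split_ifs with h
    · obtain ⟨i, hi⟩ := h
      have : p (x, y) = f i x y := by simp only [hf]; rw [if_pos hi]
      rw [this]
      exact Finset.single_le_sum (fun j _ => fnonneg j x y) (Finset.mem_univ i)
    · exact Finset.sum_nonneg fun i _ => fnonneg i x y
  -- Step 2: key Bhattacharyya bound for each (i, w, y)
  have key : ∀ (i : Fin n) (w : Fin i → Bool) (y : Y),
      scProb p i (!(uhat i w y)) w y ≤
        Real.sqrt (scProb p i false w y * scProb p i true w y) := by
    intro i w y
    have h0 := scProb_nonneg p hp i (!(uhat i w y)) w y
    have hle := hmax i w y (!(uhat i w y))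
    have hprod : scProb p i false w y * scProb p i true w y
        = scProb p i (!(uhat i w y)) w y * scProb p i (uhat i w y) w y := by
      cases h : uhat i w y <;> simp [h, mul_comm]
    rw [hprod]
    calc scProb p i (!(uhat i w y)) w y
        = Real.sqrt (scProb p i (!(uhat i w y)) w y * scProb p i (!(uhat i w y)) w y) := by
          rw [Real.sqrt_mul_self h0]
      _ ≤ _ := Real.sqrt_le_sqrt (by nlinarith)
  -- Step 3: for fixed i, y, regroup the sum over x by the past w
  have regroup : ∀ (i : Fin n) (y : Y),
      ∑ x : Fin n → Bool, f i x y
        = ∑ w : Fin i → Bool, scProb p i (!(uhat i w y)) w y := by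
    intro i y
    unfold scProb
    rw [Finset.sum_comm]
    refine Finset.sum_congr rfl fun x _ => ?_
    set pastx : Fin i → Bool := fun j => x (Fin.castLE i.isLt.le j) with hpast
    rw [Finset.sum_eq_single pastx]
    · simp only [hf, hpast]
      rcases Bool.eq_false_or_eq_true (uhat i (fun j => x (Fin.castLE i.isLt.le j)) y) with h | h <;>
        rcases Bool.eq_false_or_eq_true (x i) with h' | h' <;>
          simp [h, h']
    · intro w' _ hw'
      rw [if_neg]
      rintro ⟨-, h2⟩
      exact hw' ((funext h2 : pastx = w')).symm
    · intro h; exact absurd (Finset.mem_univ pastx) h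
  -- put everything together
  calc ∑ x : Fin n → Bool, ∑ y : Y,
        (if ∃ i : Fin n, uhat i (fun j => x (Fin.castLE i.isLt.le j)) y ≠ x i
          then p (x, y) else 0)
      ≤ ∑ x : Fin n → Bool, ∑ y : Y, ∑ i : Fin n, f i x y :=
        Finset.sum_le_sum fun x _ => Finset.sum_le_sum fun y _ => step1 x y
    _ = ∑ x : Fin n → Bool, ∑ i : Fin n, ∑ y : Y, f i x y :=
        Finset.sum_congr rfl fun x _ => Finset.sum_comm
    _ = ∑ i : Fin n, ∑ x : Fin n → Bool, ∑ y : Y, f i x y := Finset.sum_comm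
    _ = ∑ i : Fin n, ∑ y : Y, ∑ x : Fin n → Bool, f i x y :=
        Finset.sum_congr rfl fun i _ => Finset.sum_comm
    _ = ∑ i : Fin n, ∑ y : Y, ∑ w : Fin i → Bool, scProb p i (!(uhat i w y)) w y :=
        Finset.sum_congr rfl fun i _ => Finset.sum_congr rfl fun y _ => regroup i y
    _ ≤ ∑ i : Fin n, ∑ y : Y, ∑ w : Fin i → Bool,
          Real.sqrt (scProb p i false w y * scProb p i true w y) :=
        Finset.sum_le_sum fun i _ => Finset.sum_le_sum fun y _ =>
          Finset.sum_le_sum fun w _ => key i w y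
    _ = (1 / 2) * ∑ i : Fin n, scZ p i := by
        unfold scZ
        rw [Finset.mul_sum]
        refine Finset.sum_congr rfl fun i _ => ?_
        rw [Finset.sum_comm]
        ring
end
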